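/- arXiv:0704.1633 — 10 statements merged into one kernel-verified Lean document; each statement's English description precedes it below -/
import Mathlib

section
/- Let H be a real Hilbert space and let H_0 ⊆ H_1 and H_0 ⊆ H_2 be closed subspaces such that every vector of H_1 ∩ H_0^⊥ is orthogonal to every vector of H_2 ∩ H_0^⊥. Let K_1 ⊆ H_1 and K_2 ⊆ H_2 be closed subspaces whose orthogonal projections satisfy P_{K_1} x = P_{K_2} x ∈ H_0 for every x ∈ H_0. Then for all v_1, v_1' ∈ H_1 and v_2, v_2' ∈ H_2 with v_1 + v_2 = v_1' + v_2', one has P_{K_1} v_1 + P_{K_2} v_2 = P_{K_1} v_1' + P_{K_2} v_2'; that is, the map P_3(v_1 + v_2) := P_{K_1} v_1 + P_{K_2} v_2 on H_1 + H_2 is well defined. -/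
open scoped RealInnerProductSpace

/-- Well-definedness of the amalgamated projection: if `H₀ ⊆ H₁`, `H₀ ⊆ H₂` are closed
subspaces with `H₁ ∩ H₀ᗮ ⟂ H₂ ∩ H₀ᗮ`, and `K₁ ⊆ H₁`, `K₂ ⊆ H₂` are closed subspaces whose
orthogonal projections agree on `H₀` and map `H₀` into `H₀`, then
`P_{K₁} v₁ + P_{K₂} v₂` depends only on `v₁ + v₂`. -/
theorem stmt0 {H : Type*} [NormedAddCommGroup H] [InnerProductSpace ℝ H] [CompleteSpace H]
    (H0 H1 H2 K1 K2 : Submodule ℝ H)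
    [CompleteSpace H0] [CompleteSpace H1] [CompleteSpace H2]
    [CompleteSpace K1] [CompleteSpace K2]
    (h01 : H0 ≤ H1) (h02 : H0 ≤ H2)
    (horth : ∀ x ∈ H1 ⊓ H0ᗮ, ∀ y ∈ H2 ⊓ H0ᗮ, ⟪x, y⟫ = 0)
    (hK1 : K1 ≤ H1) (hK2 : K2 ≤ H2)
    (hproj : ∀ x ∈ H0,
      (K1.orthogonalProjectionOnto x : H) = (K2.orthogonalProjectionOnto x : H) ∧
      (K1.orthogonalProjectionOnto x : H) ∈ H0)
    (v1 v1' v2 v2' : H)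
    (hv1 : v1 ∈ H1) (hv1' : v1' ∈ H1) (hv2 : v2 ∈ H2) (hv2' : v2' ∈ H2)
    (heq : v1 + v2 = v1' + v2') :
    (K1.orthogonalProjectionOnto v1 : H) + (K2.orthogonalProjectionOnto v2 : H) =
      (K1.orthogonalProjectionOnto v1' : H) + (K2.orthogonalProjectionOnto v2' : H) := by
  set w := v1 - v1' with hw_def
  have hw12 : w = v2' - v2 := by rw [hw_def]; rw [sub_eq_sub_iff_add_eq_add]; rw [heq]; abel
  have hwH1 : w ∈ H1 := H1.sub_mem hv1 hv1'
  have hwH2 : w ∈ H2 := hw12 ▸ H2.sub_mem hv2' hv2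
  -- the part of w orthogonal to H0 vanishes
  set u := w - (H0.orthogonalProjectionOnto w : H) with hu_def
  have huO : u ∈ H0ᗮ := by exact H0.sub_starProjection_mem_orthogonal w
  have huH1 : u ∈ H1 := H1.sub_mem hwH1 (h01 (H0.orthogonalProjectionOnto w).2)
  have huH2 : u ∈ H2 := H2.sub_mem hwH2 (h02 (H0.orthogonalProjectionOnto w).2)
  have hu0 : u = 0 := by
    have := horth u ⟨huH1, huO⟩ u ⟨huH2, huO⟩
    exact inner_self_eq_zero.mp this
  have hwH0 : w ∈ H0 := by
    have : w = (H0.orthogonalProjectionOnto w : H) := by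
      have := hu0; rw [hu_def] at this; exact sub_eq_zero.mp this
    rw [this]; exact (H0.orthogonalProjectionOnto w).2
  have hkey : (K1.orthogonalProjectionOnto w : H) = (K2.orthogonalProjectionOnto w : H) :=
    (hproj w hwH0).1
  have e1 : (K1.orthogonalProjectionOnto w : H) =
      (K1.orthogonalProjectionOnto v1 : H) - (K1.orthogonalProjectionOnto v1' : H) := by
    rw [hw_def, map_sub]; rfl
  have e2 : (K2.orthogonalProjectionOnto w : H) =
      (K2.orthogonalProjectionOnto v2' : H) - (K2.orthogonalProjectionOnto v2 : H) := by
    rw [hw12, map_sub]; rfl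
  rw [e1, e2, sub_eq_sub_iff_add_eq_add] at hkey
  rw [hkey]; abel
end

section
/- Let H be a real Hilbert space and let H_0 ⊆ H_1 and H_0 ⊆ H_2 be closed subspaces such that every vector of H_1 ∩ H_0^⊥ is orthogonal to every vector of H_2 ∩ H_0^⊥. Let K_1 ⊆ H_1 and K_2 ⊆ H_2 be closed subspaces whose orthogonal projections satisfy P_{K_1} x = P_{K_2} x ∈ H_0 for every x ∈ H_0, and let K denote the closure of K_1 + K_2. Then for all v_1 ∈ H_1 and v_2 ∈ H_2, P_K(v_1 + v_2) = P_{K_1} v_1 + P_{K_2} v_2. In particular, the amalgamated map P_3(v_1 + v_2) = P_{K_1} v_1 + P_{K_2} v_2 is (the restriction of) an orthogonal projection. -/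
open scoped RealInnerProductSpace

/-- Auxiliary lemma: if `v ∈ H_B`, then `v - P_{K_B} v` is orthogonal to `K_A`. -/
lemma aux_orth {H : Type*} [NormedAddCommGroup H] [InnerProductSpace ℝ H] [CompleteSpace H]
    (H0 HA HB KA KB : Submodule ℝ H)
    [CompleteSpace H0] [CompleteSpace KA] [CompleteSpace KB]
    (h0A : H0 ≤ HA) (h0B : H0 ≤ HB)
    (horth : ∀ x ∈ HA ⊓ H0ᗮ, ∀ y ∈ HB ⊓ H0ᗮ, ⟪x, y⟫ = 0)
    (hKA : KA ≤ HA) (hKB : KB ≤ HB)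
    (hproj : ∀ x ∈ H0,
      (Submodule.orthogonalProjectionOnto KA x : H) = (Submodule.orthogonalProjectionOnto KB x : H) ∧
      (Submodule.orthogonalProjectionOnto KA x : H) ∈ H0)
    (v : H) (hv : v ∈ HB) :
    ∀ w ∈ KA, ⟪v - (Submodule.orthogonalProjectionOnto KB v : H), w⟫ = 0 := by
  set z : H := v - (Submodule.orthogonalProjectionOnto KB v : H) with hz
  have hzKB : z ∈ KBᗮ := Submodule.sub_starProjection_mem_orthogonal v
  have hzHB : z ∈ HB := HB.sub_mem hv (hKB (Submodule.orthogonalProjectionOnto KB v).2)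
  set z0 : H := (Submodule.orthogonalProjectionOnto H0 z : H) with hz0
  have hz0H0 : z0 ∈ H0 := (Submodule.orthogonalProjectionOnto H0 z).2
  have hzz0 : z - z0 ∈ H0ᗮ := Submodule.sub_starProjection_mem_orthogonal z
  -- `P_{KA} z0 = P_{KB} z0 = 0`.
  have hPz0 : (Submodule.orthogonalProjectionOnto KB z0 : H) = 0 := by
    have hmem : (Submodule.orthogonalProjectionOnto KB z0 : H) ∈ H0 := by
      have h := hproj z0 hz0H0
      rw [← h.1]; exact h.2
    have h1 : ⟪z - z0, (Submodule.orthogonalProjectionOnto KB z0 : H)⟫ = 0 := by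
      rw [real_inner_comm]; exact hzz0 _ hmem
    have h2 : ⟪z, (Submodule.orthogonalProjectionOnto KB z0 : H)⟫ = 0 := by
      rw [Submodule.mem_orthogonal'] at hzKB
      exact hzKB _ (Submodule.orthogonalProjectionOnto KB z0).2
    have h3 : ⟪z0 - (Submodule.orthogonalProjectionOnto KB z0 : H),
        (Submodule.orthogonalProjectionOnto KB z0 : H)⟫ = 0 :=
      Submodule.starProjection_inner_eq_zero z0 _ (Submodule.orthogonalProjectionOnto KB z0).2
    have h4 : ⟪(Submodule.orthogonalProjectionOnto KB z0 : H), (Submodule.orthogonalProjectionOnto KB z0 : H)⟫ = 0 := by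
      have h2' := h2
      rw [show z = (z - z0) + z0 by abel, inner_add_left, h1, zero_add] at h2'
      have h5 := h3
      rw [inner_sub_left, h2', zero_sub, neg_eq_zero] at h5
      exact h5
    exact inner_self_eq_zero.mp h4
  have hz0KA : z0 ∈ KAᗮ := by
    rw [← Submodule.orthogonalProjectionOnto_eq_zero_iff]
    exact Subtype.ext (by rw [(hproj z0 hz0H0).1, hPz0]; rfl)
  intro w hw
  set w0 : H := (Submodule.orthogonalProjectionOnto H0 w : H) with hw0
  have hw0H0 : w0 ∈ H0 := (Submodule.orthogonalProjectionOnto H0 w).2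
  have hww0 : w - w0 ∈ H0ᗮ := Submodule.sub_starProjection_mem_orthogonal w
  have hww0HA : w - w0 ∈ HA := HA.sub_mem (hKA hw) (h0A hw0H0)
  -- split the inner product
  have key1 : ⟪z - z0, w - w0⟫ = 0 := by
    rw [real_inner_comm]
    exact horth _ ⟨hww0HA, hww0⟩ _ ⟨HB.sub_mem hzHB (h0B hz0H0), hzz0⟩
  have key2 : ⟪z - z0, w0⟫ = 0 := by rw [real_inner_comm]; exact hzz0 _ hw0H0
  have key3 : ⟪z0, w⟫ = 0 := by
    rw [Submodule.mem_orthogonal'] at hz0KA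
    exact hz0KA _ hw
  show ⟪z, w⟫ = 0
  have expand : ⟪z, w⟫ = ⟪z - z0, w - w0⟫ + ⟪z - z0, w0⟫ + ⟪z0, w⟫ := by
    simp only [inner_sub_left, inner_sub_right]; ring
  rw [expand, key1, key2, key3]; ring

/-- The amalgam of two orthogonal projections extending a common projection is again an
orthogonal projection: with `K` the closure of `K₁ + K₂`,
`P_K (v₁ + v₂) = P_{K₁} v₁ + P_{K₂} v₂` for `v₁ ∈ H₁`, `v₂ ∈ H₂`. -/
theorem stmt1 {H : Type*} [NormedAddCommGroup H] [InnerProductSpace ℝ H] [CompleteSpace H]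
    (H0 H1 H2 K1 K2 K : Submodule ℝ H)
    [CompleteSpace H0] [CompleteSpace H1] [CompleteSpace H2]
    [CompleteSpace K1] [CompleteSpace K2] [CompleteSpace K]
    (h01 : H0 ≤ H1) (h02 : H0 ≤ H2)
    (horth : ∀ x ∈ H1 ⊓ H0ᗮ, ∀ y ∈ H2 ⊓ H0ᗮ, ⟪x, y⟫ = 0)
    (hK1 : K1 ≤ H1) (hK2 : K2 ≤ H2)
    (hproj : ∀ x ∈ H0,
      (Submodule.orthogonalProjectionOnto K1 x : H) = (Submodule.orthogonalProjectionOnto K2 x : H) ∧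
      (Submodule.orthogonalProjectionOnto K1 x : H) ∈ H0)
    (hK : K = (K1 ⊔ K2).topologicalClosure) :
    ∀ v1 ∈ H1, ∀ v2 ∈ H2,
      (Submodule.orthogonalProjectionOnto K (v1 + v2) : H) =
        (Submodule.orthogonalProjectionOnto K1 v1 : H) + (Submodule.orthogonalProjectionOnto K2 v2 : H) := by
  intro v1 hv1 v2 hv2
  have horth' : ∀ x ∈ H2 ⊓ H0ᗮ, ∀ y ∈ H1 ⊓ H0ᗮ, ⟪x, y⟫ = 0 := by
    intro x hx y hy
    rw [real_inner_comm]
    exact horth y hy x hx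
  have hproj' : ∀ x ∈ H0,
      (Submodule.orthogonalProjectionOnto K2 x : H) = (Submodule.orthogonalProjectionOnto K1 x : H) ∧
      (Submodule.orthogonalProjectionOnto K2 x : H) ∈ H0 := by
    intro x hx
    obtain ⟨h1, h2⟩ := hproj x hx
    exact ⟨h1.symm, h1 ▸ h2⟩
  -- the candidate projection
  set u : H := (Submodule.orthogonalProjectionOnto K1 v1 : H) + (Submodule.orthogonalProjectionOnto K2 v2 : H) with hu
  have humem : u ∈ K := by
    rw [hK]
    exact (K1 ⊔ K2).le_topologicalClosure
      (Submodule.add_mem_sup (Submodule.orthogonalProjectionOnto K1 v1).2 (Submodule.orthogonalProjectionOnto K2 v2).2)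
  -- the difference is orthogonal to `K1 ⊔ K2`
  have hdiff1 : v1 + v2 - u ∈ K1ᗮ := by
    rw [Submodule.mem_orthogonal']
    intro w hw
    have e : v1 + v2 - u = (v1 - (Submodule.orthogonalProjectionOnto K1 v1 : H))
        + (v2 - (Submodule.orthogonalProjectionOnto K2 v2 : H)) := by rw [hu]; abel
    rw [e, inner_add_left,
      (by exact Submodule.starProjection_inner_eq_zero v1 w hw : ⟪v1 - (Submodule.orthogonalProjectionOnto K1 v1 : H), w⟫ = 0),
      aux_orth H0 H1 H2 K1 K2 h01 h02 horth hK1 hK2 hproj v2 hv2 w hw, zero_add]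
  have hdiff2 : v1 + v2 - u ∈ K2ᗮ := by
    rw [Submodule.mem_orthogonal']
    intro w hw
    have e : v1 + v2 - u = (v2 - (Submodule.orthogonalProjectionOnto K2 v2 : H))
        + (v1 - (Submodule.orthogonalProjectionOnto K1 v1 : H)) := by rw [hu]; abel
    rw [e, inner_add_left,
      (by exact Submodule.starProjection_inner_eq_zero v2 w hw : ⟪v2 - (Submodule.orthogonalProjectionOnto K2 v2 : H), w⟫ = 0),
      aux_orth H0 H2 H1 K2 K1 h02 h01 horth' hK2 hK1 hproj' v1 hv1 w hw, zero_add]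
  have hdiff : v1 + v2 - u ∈ (K1 ⊔ K2)ᗮ := by
    rw [← Submodule.inf_orthogonal]; exact ⟨hdiff1, hdiff2⟩
  have hdiffK : v1 + v2 - u ∈ Kᗮ := by
    rw [hK, ← Submodule.orthogonal_orthogonal_eq_closure]
    exact Submodule.le_orthogonal_orthogonal _ hdiff
  exact Submodule.eq_starProjection_of_mem_orthogonal humem hdiffK
end

section
/- Let H be a real Hilbert space and let H_0 ⊆ H_1 be closed subspaces. Let d_1 : H_1 → [0,1] satisfy axiom (2) on H_1 (d_1(y) ≤ d_1(x) + ‖x − y‖ for all x, y ∈ H_1), and suppose the restriction d_0 of d_1 to H_0 satisfies axiom (1) on H_0 (for every x ∈ H_0 with d_0(x) < 1 and every ε > 0 there is y ∈ H_0 with d_0(y) ≤ ε and |d_0(x) − ‖x − y‖| ≤ ε). Then for every v ∈ H_1, d_1(v) ≤ sqrt( d_1(P_{H_0}(v))² + ‖v − P_{H_0}(v)‖² ). -/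
open RealInnerProductSpace


/-- If `d₁ : H₁ → [0,1]` satisfies axiom (2) on `H₁` and its restriction to the closed
subspace `H₀ ⊆ H₁` satisfies axiom (1) on `H₀`, then for every `v ∈ H₁`,
`d₁ v ≤ sqrt(d₁(P_{H₀} v)² + ‖v - P_{H₀} v‖²)`. -/
theorem stmt8 {H : Type*} [NormedAddCommGroup H] [InnerProductSpace ℝ H] [CompleteSpace H]
    (H0 H1 : Submodule ℝ H) [CompleteSpace H0] [CompleteSpace H1] (h01 : H0 ≤ H1)
    (d1 : H → ℝ) (hrange : ∀ x ∈ H1, d1 x ∈ Set.Icc (0 : ℝ) 1)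
    (ax2 : ∀ x ∈ H1, ∀ y ∈ H1, d1 y ≤ d1 x + ‖x - y‖)
    (ax1 : ∀ x ∈ H0, d1 x < 1 → ∀ ε > 0, ∃ y ∈ H0, d1 y ≤ ε ∧ |d1 x - ‖x - y‖| ≤ ε) :
    ∀ v ∈ H1,
      d1 v ≤ Real.sqrt (d1 ((Submodule.orthogonalProjection H0 v : H)) ^ 2 +
        ‖v - (Submodule.orthogonalProjection H0 v : H)‖ ^ 2) := by
  intro v hv
  set p : H := (Submodule.orthogonalProjection H0 v : H) with hp
  have hpH0 : p ∈ H0 := (Submodule.orthogonalProjection H0 v).2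
  have hpH1 : p ∈ H1 := h01 hpH0
  have hdp0 : 0 ≤ d1 p := (hrange p hpH1).1
  by_cases hlt : d1 p < 1
  · -- main case
    apply le_of_forall_pos_le_add
    intro ε hε
    obtain ⟨y, hyH0, hdy, hdist⟩ := ax1 p hpH0 hlt (ε/2) (by linarith)
    have hyH1 : y ∈ H1 := h01 hyH0
    have h1 : d1 v ≤ d1 y + ‖y - v‖ := ax2 y hyH1 v hv
    -- Pythagoras: y - v = (y - p) + (p - v), with y - p ∈ H0 and p - v ∈ H0ᗮ
    have horth : v - p ∈ H0ᗮ := H0.sub_starProjection_mem_orthogonal v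
    have hinner : (inner ℝ (y - p) (p - v) : ℝ) = 0 := by
      have h := horth (y - p) (H0.sub_mem hyH0 hpH0)
      rw [show p - v = -(v - p) from (neg_sub v p).symm, inner_neg_right, h, neg_zero]
    have hpyth : ‖y - v‖ ^ 2 = ‖y - p‖ ^ 2 + ‖p - v‖ ^ 2 := by
      have := norm_add_sq_real (y - p) (p - v)
      rw [hinner] at this
      simpa [sub_add_sub_cancel] using this
    have hpy : ‖p - y‖ ≤ d1 p + ε/2 := by
      have := abs_le.1 hdist
      linarith [this.1]
    have hyp : ‖y - p‖ = ‖p - y‖ := norm_sub_rev _ _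
    have hnn : (0:ℝ) ≤ d1 p + ε/2 := by linarith
    have h2 : ‖y - v‖ ≤ Real.sqrt ((d1 p + ε/2) ^ 2 + ‖v - p‖ ^ 2) := by
      rw [show ‖y - v‖ = Real.sqrt (‖y - v‖ ^ 2) by
        rw [Real.sqrt_sq (norm_nonneg _)]]
      apply Real.sqrt_le_sqrt
      rw [hpyth, norm_sub_rev p v]
      have : ‖y - p‖ ^ 2 ≤ (d1 p + ε/2) ^ 2 := by
        rw [hyp]; exact pow_le_pow_left₀ (norm_nonneg _) hpy 2
      linarith
    have h3 : Real.sqrt ((d1 p + ε/2) ^ 2 + ‖v - p‖ ^ 2)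
        ≤ Real.sqrt (d1 p ^ 2 + ‖v - p‖ ^ 2) + ε/2 := by
      have hs : 0 ≤ Real.sqrt (d1 p ^ 2 + ‖v - p‖ ^ 2) := Real.sqrt_nonneg _
      have hge : d1 p ≤ Real.sqrt (d1 p ^ 2 + ‖v - p‖ ^ 2) := by
        exact (Real.le_sqrt hdp0 (by positivity)).2 (le_add_of_nonneg_right (sq_nonneg _))
      have : (d1 p + ε/2) ^ 2 + ‖v - p‖ ^ 2
          ≤ (Real.sqrt (d1 p ^ 2 + ‖v - p‖ ^ 2) + ε/2) ^ 2 := by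
        have hsq : Real.sqrt (d1 p ^ 2 + ‖v - p‖ ^ 2) ^ 2 = d1 p ^ 2 + ‖v - p‖ ^ 2 :=
          Real.sq_sqrt (by positivity)
        nlinarith
      calc Real.sqrt ((d1 p + ε/2) ^ 2 + ‖v - p‖ ^ 2)
          ≤ Real.sqrt ((Real.sqrt (d1 p ^ 2 + ‖v - p‖ ^ 2) + ε/2) ^ 2) :=
            Real.sqrt_le_sqrt this
        _ = Real.sqrt (d1 p ^ 2 + ‖v - p‖ ^ 2) + ε/2 := Real.sqrt_sq (by linarith)
    linarith
  · -- d1 p = 1 case : d1 v ≤ 1 ≤ sqrt(d1 p ^ 2 + ...)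
    push_neg at hlt
    have h1 : d1 v ≤ 1 := (hrange v hv).2
    have : (1:ℝ) ≤ Real.sqrt (d1 p ^ 2 + ‖v - p‖ ^ 2) := by
      rw [show (1:ℝ) = Real.sqrt 1 by simp]
      apply Real.sqrt_le_sqrt
      nlinarith [sq_nonneg (‖v - p‖)]
    linarith
end

section
/- Let H be a real Hilbert space and let H_0 ⊆ H_1 and H_0 ⊆ H_2 be closed subspaces such that every vector of H_1 ∩ H_0^⊥ is orthogonal to every vector of H_2 ∩ H_0^⊥. Let N_1 ⊆ H_1 and N_2 ⊆ H_2 be nonempty subsets. Then for every v in the closure of H_1 + H_2: dist(v, N_1 ∪ N_2)² = min( dist(P_{H_1}(v), N_1)² + ‖P_{H_2 ∩ H_0^⊥}(v)‖², dist(P_{H_2}(v), N_2)² + ‖P_{H_1 ∩ H_0^⊥}(v)‖² ). -/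
open scoped RealInnerProductSpace

private lemma le_infDist' {α : Type*} [PseudoMetricSpace α] {s : Set α} (hs : s.Nonempty)
    {x : α} {b : ℝ} (h : ∀ y ∈ s, b ≤ dist x y) : b ≤ Metric.infDist x s := by
  by_contra hlt
  push_neg at hlt
  obtain ⟨y, hy, hdy⟩ := (Metric.infDist_lt_iff hs).1 hlt
  exact absurd (h y hy) (by linarith)

private lemma infDist_union' {α : Type*} [PseudoMetricSpace α] {s t : Set α} (hs : s.Nonempty)
    (ht : t.Nonempty) (x : α) :
    Metric.infDist x (s ∪ t) = min (Metric.infDist x s) (Metric.infDist x t) := by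
  rw [Metric.infDist, Metric.infDist, Metric.infDist, EMetric.infEdist_union,
    ENNReal.toReal_inf (Metric.infEdist_ne_top hs) (Metric.infEdist_ne_top ht)]

private lemma infDist_sq_shift {α : Type*} [PseudoMetricSpace α] {s : Set α} (hs : s.Nonempty)
    {v u : α} {c : ℝ} (hc : 0 ≤ c)
    (h : ∀ n ∈ s, dist v n ^ 2 = dist u n ^ 2 + c) :
    Metric.infDist v s ^ 2 = Metric.infDist u s ^ 2 + c := by
  set D := Metric.infDist v s with hD
  set d := Metric.infDist u s with hd
  have hD0 : 0 ≤ D := Metric.infDist_nonneg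
  have hd0 : 0 ≤ d := Metric.infDist_nonneg
  apply le_antisymm
  · -- D^2 ≤ d^2 + c
    rcases le_or_gt (D ^ 2) c with hle | hgt
    · nlinarith
    · have hkey : ∀ n ∈ s, Real.sqrt (D ^ 2 - c) ≤ dist u n := by
        intro n hn
        have h1 : D ≤ dist v n := Metric.infDist_le_dist_of_mem hn
        have h2 : D ^ 2 - c ≤ dist u n ^ 2 := by
          have := h n hn; nlinarith
        calc Real.sqrt (D ^ 2 - c) ≤ Real.sqrt (dist u n ^ 2) := Real.sqrt_le_sqrt h2
          _ = dist u n := Real.sqrt_sq dist_nonneg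
      have h3 : Real.sqrt (D ^ 2 - c) ≤ d := le_infDist' hs hkey
      have h4 : D ^ 2 - c = Real.sqrt (D ^ 2 - c) ^ 2 := (Real.sq_sqrt (by linarith)).symm
      nlinarith [Real.sqrt_nonneg (D ^ 2 - c)]
  · -- d^2 + c ≤ D^2
    have hkey : ∀ n ∈ s, Real.sqrt (d ^ 2 + c) ≤ dist v n := by
      intro n hn
      have h1 : d ≤ dist u n := Metric.infDist_le_dist_of_mem hn
      have h2 : d ^ 2 + c ≤ dist v n ^ 2 := by
        have := h n hn; nlinarith
      calc Real.sqrt (d ^ 2 + c) ≤ Real.sqrt (dist v n ^ 2) := Real.sqrt_le_sqrt h2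
        _ = dist v n := Real.sqrt_sq dist_nonneg
    have h3 : Real.sqrt (d ^ 2 + c) ≤ D := le_infDist' hs hkey
    have h4 : d ^ 2 + c = Real.sqrt (d ^ 2 + c) ^ 2 := (Real.sq_sqrt (by nlinarith)).symm
    nlinarith [Real.sqrt_nonneg (d ^ 2 + c)]

/-- A vector of `H₂ ⊓ H₀ᗮ` is orthogonal to every vector of `H₁`. -/
private lemma ortho_all {H : Type*} [NormedAddCommGroup H] [InnerProductSpace ℝ H]
    (H0 H1 H2 : Submodule ℝ H) [CompleteSpace H0]
    (h01 : H0 ≤ H1)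
    (horth : ∀ x ∈ H1 ⊓ H0ᗮ, ∀ y ∈ H2 ⊓ H0ᗮ, ⟪x, y⟫ = 0)
    {y : H} (hy : y ∈ H2 ⊓ H0ᗮ) : ∀ x ∈ H1, ⟪y, x⟫ = 0 := by
  intro x hx
  set x0 : H := (Submodule.orthogonalProjectionOnto H0 x : H) with hx0
  have hx0m : x0 ∈ H0 := (Submodule.orthogonalProjectionOnto H0 x).2
  have hxa : x - x0 ∈ H1 ⊓ H0ᗮ :=
    ⟨H1.sub_mem hx (h01 hx0m), Submodule.sub_starProjection_mem_orthogonal (K := H0) x⟩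
  have h1 : ⟪y, x0⟫ = 0 := by
    have := hy.2 x0 hx0m
    rwa [real_inner_comm] at this
  have h2 : ⟪y, x - x0⟫ = 0 := by
    have := horth _ hxa _ hy
    rwa [real_inner_comm] at this
  have : ⟪y, x0 + (x - x0)⟫ = 0 := by
    rw [inner_add_right, h1, h2]; ring
  simpa using this

/-- Decomposition of any element of the closure of `H₁ + H₂` as
`P_{H₁} v + P_{H₂ ⊓ H₀ᗮ} v`. -/
private lemma decomp {H : Type*} [NormedAddCommGroup H] [InnerProductSpace ℝ H]
    (H0 H1 H2 : Submodule ℝ H) [CompleteSpace H0] [CompleteSpace H1]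
    [CompleteSpace ↥(H2 ⊓ H0ᗮ)]
    (h01 : H0 ≤ H1) (h02 : H0 ≤ H2)
    (horth : ∀ x ∈ H1 ⊓ H0ᗮ, ∀ y ∈ H2 ⊓ H0ᗮ, ⟪x, y⟫ = 0)
    (v : H) (hv : v ∈ (H1 ⊔ H2).topologicalClosure) :
    (Submodule.orthogonalProjectionOnto H1 v : H) + (Submodule.orthogonalProjectionOnto (H2 ⊓ H0ᗮ) v : H) = v := by
  set B := H2 ⊓ H0ᗮ with hBdef
  set u : H := (Submodule.orthogonalProjectionOnto H1 v : H) with hu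
  set b : H := (Submodule.orthogonalProjectionOnto B v : H) with hb
  have hum : u ∈ H1 := (Submodule.orthogonalProjectionOnto H1 v).2
  have hbm : b ∈ B := (Submodule.orthogonalProjectionOnto B v).2
  have hB1 : ∀ y ∈ B, ∀ x ∈ H1, ⟪y, x⟫ = 0 := fun y hy =>
    ortho_all H0 H1 H2 h01 horth hy
  set w : H := v - u - b with hw
  -- `w` is orthogonal to everything in `H1 ⊔ H2`
  have hsup : H1 ⊔ H2 ≤ H1 ⊔ B := by
    apply sup_le le_sup_left
    intro y hy
    have h1 : (Submodule.orthogonalProjectionOnto H0 y : H) ∈ H0 := (Submodule.orthogonalProjectionOnto H0 y).2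
    have h2 : y - (Submodule.orthogonalProjectionOnto H0 y : H) ∈ B :=
      ⟨H2.sub_mem hy (h02 h1), Submodule.sub_starProjection_mem_orthogonal (K := H0) y⟩
    have : y = (Submodule.orthogonalProjectionOnto H0 y : H) + (y - (Submodule.orthogonalProjectionOnto H0 y : H)) := by abel
    rw [this]
    exact Submodule.add_mem _ (Submodule.mem_sup_left (h01 h1)) (Submodule.mem_sup_right h2)
  have hkey : ∀ z ∈ H1 ⊔ H2, ⟪w, z⟫ = 0 := by
    intro z hz
    obtain ⟨x, hx, y, hy, rfl⟩ := Submodule.mem_sup.1 (hsup hz)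
    have hwx : ⟪w, x⟫ = 0 := by
      have h1 : ⟪v - u, x⟫ = 0 := Submodule.starProjection_inner_eq_zero (K := H1) v x hx
      have h2 : ⟪b, x⟫ = 0 := hB1 b hbm x hx
      have : ⟪(v - u) - b, x⟫ = 0 := by rw [inner_sub_left, h1, h2]; ring
      simpa [hw, sub_sub] using this
    have hwy : ⟪w, y⟫ = 0 := by
      have h1 : ⟪v - b, y⟫ = 0 := Submodule.starProjection_inner_eq_zero (K := B) v y hy
      have h2 : ⟪u, y⟫ = 0 := by
        have := hB1 y hy u hum; rwa [real_inner_comm] at this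
      have : ⟪(v - b) - u, y⟫ = 0 := by rw [inner_sub_left, h1, h2]; ring
      have he : (v - b) - u = w := by rw [hw]; abel
      rwa [he] at this
    rw [inner_add_right, hwx, hwy]; ring
  have hwv : ⟪w, v⟫ = 0 := by
    have hcl : IsClosed {z : H | ⟪w, z⟫ = 0} :=
      isClosed_eq (Continuous.inner continuous_const continuous_id) continuous_const
    have hvcl : v ∈ closure ((H1 ⊔ H2 : Submodule ℝ H) : Set H) := hv
    exact closure_minimal hkey hcl hvcl
  have hwub : ⟪w, u + b⟫ = 0 :=
    hkey _ (Submodule.add_mem _ (Submodule.mem_sup_left hum)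
      (Submodule.mem_sup_right hbm.1))
  have hww : ⟪w, w⟫ = 0 := by
    have : ⟪w, v - (u + b)⟫ = 0 := by rw [inner_sub_right, hwv, hwub]; ring
    have he : v - (u + b) = w := by rw [hw]; abel
    rwa [he] at this
  have hw0 : w = 0 := inner_self_eq_zero.1 hww
  have : v - (u + b) = 0 := by rw [← hw0, hw]; abel
  linear_combination (norm := abel) -this

/-- Free amalgamation formula for the distance to the union of two random subsets:
if `H₁ ∩ H₀ᗮ ⟂ H₂ ∩ H₀ᗮ` and `N₁ ⊆ H₁`, `N₂ ⊆ H₂` are nonempty, then for every `v` in the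
closure of `H₁ + H₂`,
`dist(v, N₁ ∪ N₂)² = min(dist(P_{H₁}v, N₁)² + ‖P_{H₂⊓H₀ᗮ}v‖², dist(P_{H₂}v, N₂)² + ‖P_{H₁⊓H₀ᗮ}v‖²)`. -/
theorem stmt9 {H : Type*} [NormedAddCommGroup H] [InnerProductSpace ℝ H] [CompleteSpace H]
    (H0 H1 H2 : Submodule ℝ H)
    [CompleteSpace H0] [CompleteSpace H1] [CompleteSpace H2]
    [CompleteSpace ↥(H1 ⊓ H0ᗮ)] [CompleteSpace ↥(H2 ⊓ H0ᗮ)]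
    (h01 : H0 ≤ H1) (h02 : H0 ≤ H2)
    (horth : ∀ x ∈ H1 ⊓ H0ᗮ, ∀ y ∈ H2 ⊓ H0ᗮ, ⟪x, y⟫ = 0)
    (N1 N2 : Set H) (hN1 : N1.Nonempty) (hN2 : N2.Nonempty)
    (hN1H : N1 ⊆ (H1 : Set H)) (hN2H : N2 ⊆ (H2 : Set H)) :
    ∀ v ∈ (H1 ⊔ H2).topologicalClosure,
      Metric.infDist v (N1 ∪ N2) ^ 2 =
        min (Metric.infDist ((Submodule.orthogonalProjectionOnto H1 v : H)) N1 ^ 2 +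
              ‖(Submodule.orthogonalProjectionOnto (H2 ⊓ H0ᗮ) v : H)‖ ^ 2)
            (Metric.infDist ((Submodule.orthogonalProjectionOnto H2 v : H)) N2 ^ 2 +
              ‖(Submodule.orthogonalProjectionOnto (H1 ⊓ H0ᗮ) v : H)‖ ^ 2) := by
  intro v hv
  have horth' : ∀ x ∈ H2 ⊓ H0ᗮ, ∀ y ∈ H1 ⊓ H0ᗮ, ⟪x, y⟫ = 0 := by
    intro x hx y hy; rw [real_inner_comm]; exact horth y hy x hx
  set u1 : H := (Submodule.orthogonalProjectionOnto H1 v : H) with hu1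
  set u2 : H := (Submodule.orthogonalProjectionOnto H2 v : H) with hu2
  set a : H := (Submodule.orthogonalProjectionOnto (H1 ⊓ H0ᗮ) v : H) with ha
  set b : H := (Submodule.orthogonalProjectionOnto (H2 ⊓ H0ᗮ) v : H) with hb
  have hd1 : u1 + b = v := decomp H0 H1 H2 h01 h02 horth v hv
  have hd2 : u2 + a = v := decomp H0 H2 H1 h02 h01 horth' v (by rwa [sup_comm])
  have hu1m : u1 ∈ H1 := (Submodule.orthogonalProjectionOnto H1 v).2
  have hu2m : u2 ∈ H2 := (Submodule.orthogonalProjectionOnto H2 v).2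
  have ham : a ∈ H1 ⊓ H0ᗮ := (Submodule.orthogonalProjectionOnto (H1 ⊓ H0ᗮ) v).2
  have hbm : b ∈ H2 ⊓ H0ᗮ := (Submodule.orthogonalProjectionOnto (H2 ⊓ H0ᗮ) v).2
  -- squared distance shift for N1
  have hshift1 : ∀ n ∈ N1, dist v n ^ 2 = dist u1 n ^ 2 + ‖b‖ ^ 2 := by
    intro n hn
    have hip : ⟪u1 - n, b⟫ = 0 := by
      have := ortho_all H0 H1 H2 h01 horth hbm (u1 - n) (H1.sub_mem hu1m (hN1H hn))
      rwa [real_inner_comm] at this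
    have he : v - n = (u1 - n) + b := by rw [← hd1]; abel
    rw [dist_eq_norm, dist_eq_norm, he, norm_add_sq_real, hip]
    ring
  have hshift2 : ∀ n ∈ N2, dist v n ^ 2 = dist u2 n ^ 2 + ‖a‖ ^ 2 := by
    intro n hn
    have hip : ⟪u2 - n, a⟫ = 0 := by
      have := ortho_all H0 H2 H1 h02 horth' ham (u2 - n) (H2.sub_mem hu2m (hN2H hn))
      rwa [real_inner_comm] at this
    have he : v - n = (u2 - n) + a := by rw [← hd2]; abel
    rw [dist_eq_norm, dist_eq_norm, he, norm_add_sq_real, hip]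
    ring
  have hi1 : Metric.infDist v N1 ^ 2 = Metric.infDist u1 N1 ^ 2 + ‖b‖ ^ 2 :=
    infDist_sq_shift hN1 (by positivity) hshift1
  have hi2 : Metric.infDist v N2 ^ 2 = Metric.infDist u2 N2 ^ 2 + ‖a‖ ^ 2 :=
    infDist_sq_shift hN2 (by positivity) hshift2
  rw [infDist_union' hN1 hN2 v, ← hi1, ← hi2]
  rcases le_total (Metric.infDist v N1) (Metric.infDist v N2) with h | h
  · rw [min_eq_left h, min_eq_left (pow_le_pow_left₀ Metric.infDist_nonneg h 2)]
  · rw [min_eq_right h, min_eq_right (pow_le_pow_left₀ Metric.infDist_nonneg h 2)]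
end

section
/- Let H be a real Hilbert space and let v_1, …, v_n, u_1, …, u_n be 2n orthonormal vectors in H (n ≥ 1). Let N = { (u_i + v_j)/2 : 1 ≤ j < i ≤ n } ∪ {0} and define d(x) = min(1, dist(x, N)). Then d(0) = 0, d((u_i + v_j)/2) = 0 whenever i > j, and d((u_i + v_j)/2) = √2/2 whenever i ≤ j. -/
open scoped RealInnerProductSpace

/-- The order-coding model of `T₀`: for orthonormal `v₁,…,vₙ,u₁,…,uₙ` and
`N = {(uᵢ + vⱼ)/2 : j < i} ∪ {0}`, the truncated distance `d(x) = min(1, dist(x, N))`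
satisfies `d 0 = 0`, `d((uᵢ+vⱼ)/2) = 0` for `i > j` and `d((uᵢ+vⱼ)/2) = √2/2` for `i ≤ j`. -/
theorem stmt11 {H : Type*} [NormedAddCommGroup H] [InnerProductSpace ℝ H] [CompleteSpace H]
    (n : ℕ) (hn : 1 ≤ n) (v u : Fin n → H)
    (hon : Orthonormal ℝ (Sum.elim v u))
    (N : Set H)
    (hN : N = {x : H | ∃ i j : Fin n, (j : ℕ) < (i : ℕ) ∧ x = (1/2 : ℝ) • (u i + v j)} ∪ {0})
    (d : H → ℝ) (hd : ∀ x, d x = min 1 (Metric.infDist x N)) :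
    d 0 = 0 ∧
    (∀ i j : Fin n, (j : ℕ) < (i : ℕ) → d ((1/2 : ℝ) • (u i + v j)) = 0) ∧
    (∀ i j : Fin n, (i : ℕ) ≤ (j : ℕ) → d ((1/2 : ℝ) • (u i + v j)) = Real.sqrt 2 / 2) := by
  have hite := orthonormal_iff_ite.mp hon
  have huu : ∀ i i', ⟪u i, u i'⟫ = if i = i' then (1:ℝ) else 0 := by
    intro i i'; have := hite (Sum.inr i) (Sum.inr i'); simpa using this
  have hvv : ∀ j j', ⟪v j, v j'⟫ = if j = j' then (1:ℝ) else 0 := by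
    intro j j'; have := hite (Sum.inl j) (Sum.inl j'); simpa using this
  have huv : ∀ i j, ⟪u i, v j⟫ = (0:ℝ) := by
    intro i j; have := hite (Sum.inr i) (Sum.inl j); simpa using this
  have hvu : ∀ j i, ⟪v j, u i⟫ = (0:ℝ) := by
    intro j i; have := hite (Sum.inl j) (Sum.inr i); simpa using this
  have h0 : (0:H) ∈ N := by rw [hN]; right; rfl
  have hNne : N.Nonempty := ⟨0, h0⟩
  -- squared norm of the point itself
  have hnormsq : ∀ i j : Fin n, ‖(1/2 : ℝ) • (u i + v j)‖^2 = 1/2 := by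
    intro i j
    rw [← real_inner_self_eq_norm_sq]
    simp only [real_inner_smul_left, real_inner_smul_right, inner_add_left, inner_add_right,
      huu, hvv, huv, hvu, ↓reduceIte]
    ring
  have hnorm : ∀ i j : Fin n, ‖(1/2 : ℝ) • (u i + v j)‖ = Real.sqrt 2 / 2 := by
    intro i j
    have h1 : ‖(1/2 : ℝ) • (u i + v j)‖ = Real.sqrt (‖(1/2 : ℝ) • (u i + v j)‖^2) :=
      (Real.sqrt_sq (norm_nonneg _)).symm
    rw [h1, hnormsq i j, show (1/2 : ℝ) = 2 / 4 by norm_num,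
      Real.sqrt_div (by norm_num : (0:ℝ) ≤ 2),
      show (4:ℝ) = 2^2 by norm_num, Real.sqrt_sq (by norm_num : (0:ℝ) ≤ 2)]
  -- squared distance between two such points
  have hdiffsq : ∀ i i' j j' : Fin n,
      ‖(1/2 : ℝ) • (u i + v j) - (1/2 : ℝ) • (u i' + v j')‖^2 =
        1 - (if i = i' then (1:ℝ) else 0)/2 - (if j = j' then (1:ℝ) else 0)/2 := by
    intro i i' j j'
    rw [← real_inner_self_eq_norm_sq]
    simp only [inner_sub_left, inner_sub_right, real_inner_smul_left, real_inner_smul_right,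
      inner_add_left, inner_add_right, huu, hvv, huv, hvu, real_inner_comm (u i') (u i),
      real_inner_comm (v j') (v j)]
    have e1 : (if i' = i then (1:ℝ) else 0) = if i = i' then 1 else 0 := by simp [eq_comm]
    have e2 : (if j' = j then (1:ℝ) else 0) = if j = j' then 1 else 0 := by simp [eq_comm]
    rw [e1, e2]
    split_ifs <;> norm_num
  -- lower bound for distance to N when i ≤ j
  have hlow : ∀ i j : Fin n, (i : ℕ) ≤ (j : ℕ) →
      ∀ y ∈ N, Real.sqrt 2 / 2 ≤ dist ((1/2 : ℝ) • (u i + v j)) y := by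
    intro i j hij y hy
    rw [hN] at hy
    have hs2 : Real.sqrt 2 / 2 = Real.sqrt ((Real.sqrt 2 / 2)^2) :=
      (Real.sqrt_sq (by positivity)).symm
    rcases hy with ⟨i', j', hlt, rfl⟩ | hy
    · rw [dist_eq_norm]
      have hsq : (Real.sqrt 2 / 2)^2 ≤ ‖(1/2 : ℝ) • (u i + v j) - (1/2 : ℝ) • (u i' + v j')‖^2 := by
        rw [hdiffsq i i' j j', div_pow, Real.sq_sqrt (by norm_num : (0:ℝ) ≤ 2)]
        have hne : ¬(i = i' ∧ j = j') := by
          rintro ⟨rfl, rfl⟩; omega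
        by_cases h1 : i = i' <;> by_cases h2 : j = j' <;>
          simp [h1, h2] at hne ⊢ <;> norm_num
      calc Real.sqrt 2 / 2 = Real.sqrt ((Real.sqrt 2 / 2)^2) := hs2
        _ ≤ Real.sqrt (‖(1/2 : ℝ) • (u i + v j) - (1/2 : ℝ) • (u i' + v j')‖^2) :=
            Real.sqrt_le_sqrt hsq
        _ = _ := Real.sqrt_sq (norm_nonneg _)
    · simp only [Set.mem_singleton_iff] at hy
      subst hy
      rw [dist_zero_right, hnorm]
  refine ⟨?_, ?_, ?_⟩
  · rw [hd, Metric.infDist_zero_of_mem h0]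
    simp
  · intro i j hij
    have hmem : (1/2 : ℝ) • (u i + v j) ∈ N := by
      rw [hN]; left; exact ⟨i, j, hij, rfl⟩
    rw [hd, Metric.infDist_zero_of_mem hmem]
    simp
  · intro i j hij
    have hle : Metric.infDist ((1/2 : ℝ) • (u i + v j)) N ≤ Real.sqrt 2 / 2 := by
      have := Metric.infDist_le_dist_of_mem (x := (1/2 : ℝ) • (u i + v j)) h0
      rwa [dist_zero_right, hnorm] at this
    have hge : Real.sqrt 2 / 2 ≤ Metric.infDist ((1/2 : ℝ) • (u i + v j)) N := by
      by_contra hlt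
      push_neg at hlt
      obtain ⟨y, hy, hdy⟩ := (Metric.infDist_lt_iff hNne).mp hlt
      exact absurd hdy (not_lt.mpr (hlow i j hij y hy))
    have heq : Metric.infDist ((1/2 : ℝ) • (u i + v j)) N = Real.sqrt 2 / 2 :=
      le_antisymm hle hge
    rw [hd, heq, min_eq_right]
    nlinarith [Real.sq_sqrt (show (0:ℝ) ≤ 2 by norm_num), Real.sqrt_nonneg 2]
end

section
/- Let H be a real Hilbert space, let I, J, S be index sets, and let {b_i : i ∈ I} ∪ {a_j : j ∈ J} ∪ {c_s : s ∈ S} be an orthonormal family in H (all vectors pairwise distinct and orthonormal). For each s ∈ S let g_s : I → J be injective. Let N = { c_s + b_i + (1/2) a_{g_s(i)} : s ∈ S, i ∈ I } ∪ {0}. Then for every s ∈ S and ℓ ∈ I, dist( c_s + b_ℓ − (1/2) a_{g_s(ℓ)}, N ) = 1; in particular ‖(c_s + b_ℓ − (1/2) a_{g_s(ℓ)}) − y‖ ≥ 1 for every y ∈ N, with equality for y = c_s + b_ℓ + (1/2) a_{g_s(ℓ)}. -/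
open scoped RealInnerProductSpace


/-- Core computation in the proof that `T_N` is not simple: with an orthonormal family
`{bᵢ} ∪ {aⱼ} ∪ {cₛ}` and injections `gₛ : I → J`, the black set
`N = {cₛ + bᵢ + (1/2)a_{gₛ(i)}} ∪ {0}` satisfies
`dist(cₛ + b_ℓ − (1/2)a_{gₛ(ℓ)}, N) = 1`, every point of `N` is at distance `≥ 1`, with
equality at `cₛ + b_ℓ + (1/2)a_{gₛ(ℓ)}`. -/
theorem stmt12 {H : Type*} [NormedAddCommGroup H] [InnerProductSpace ℝ H] [CompleteSpace H]
    {I J S : Type*} (b : I → H) (a : J → H) (c : S → H)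
    (hon : Orthonormal ℝ (Sum.elim b (Sum.elim a c)))
    (g : S → I → J) (hg : ∀ s, Function.Injective (g s))
    (N : Set H)
    (hN : N = {x : H | ∃ s i, x = c s + b i + (1/2 : ℝ) • a (g s i)} ∪ {0}) :
    ∀ (s : S) (ℓ : I),
      Metric.infDist (c s + b ℓ - (1/2 : ℝ) • a (g s ℓ)) N = 1 ∧
      (∀ y ∈ N, 1 ≤ ‖(c s + b ℓ - (1/2 : ℝ) • a (g s ℓ)) - y‖) ∧
      ‖(c s + b ℓ - (1/2 : ℝ) • a (g s ℓ)) - (c s + b ℓ + (1/2 : ℝ) • a (g s ℓ))‖ = 1 := by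
  classical
  have ip := orthonormal_iff_ite.mp hon
  have hbb : ∀ i i', ⟪b i, b i'⟫ = if i = i' then 1 else 0 := by
    intro i i'; simpa using ip (Sum.inl i) (Sum.inl i')
  have haa : ∀ j j', ⟪a j, a j'⟫ = if j = j' then 1 else 0 := by
    intro j j'; simpa using ip (Sum.inr (Sum.inl j)) (Sum.inr (Sum.inl j'))
  have hcc : ∀ s s', ⟪c s, c s'⟫ = if s = s' then 1 else 0 := by
    intro s s'; simpa using ip (Sum.inr (Sum.inr s)) (Sum.inr (Sum.inr s'))
  have hba : ∀ i j, ⟪b i, a j⟫ = 0 := by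
    intro i j; simpa using ip (Sum.inl i) (Sum.inr (Sum.inl j))
  have hab : ∀ j i, ⟪a j, b i⟫ = 0 := by
    intro j i; simpa using ip (Sum.inr (Sum.inl j)) (Sum.inl i)
  have hbc : ∀ i s, ⟪b i, c s⟫ = 0 := by
    intro i s; simpa using ip (Sum.inl i) (Sum.inr (Sum.inr s))
  have hcb : ∀ s i, ⟪c s, b i⟫ = 0 := by
    intro s i; simpa using ip (Sum.inr (Sum.inr s)) (Sum.inl i)
  have hac : ∀ j s, ⟪a j, c s⟫ = 0 := by
    intro j s; simpa using ip (Sum.inr (Sum.inl j)) (Sum.inr (Sum.inr s))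
  have hca : ∀ s j, ⟪c s, a j⟫ = 0 := by
    intro s j; simpa using ip (Sum.inr (Sum.inr s)) (Sum.inr (Sum.inl j))
  have one_le : ∀ z : H, (1 : ℝ) ≤ ⟪z, z⟫ → 1 ≤ ‖z‖ := by
    intro z hz
    have h2 : ‖z‖ ^ 2 = ⟪z, z⟫ := (real_inner_self_eq_norm_sq z).symm
    nlinarith [norm_nonneg z]
  intro s ℓ
  set x : H := c s + b ℓ - (1/2 : ℝ) • a (g s ℓ) with hx
  have heq : ‖x - (c s + b ℓ + (1/2 : ℝ) • a (g s ℓ))‖ = 1 := by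
    have : x - (c s + b ℓ + (1/2 : ℝ) • a (g s ℓ)) = -(a (g s ℓ)) := by
      rw [hx]; module
    rw [this, norm_neg]
    simpa using hon.1 (Sum.inr (Sum.inl (g s ℓ)))
  have hlb : ∀ y ∈ N, 1 ≤ ‖x - y‖ := by
    intro y hy
    rw [hN] at hy
    rcases hy with hy | hy
    · obtain ⟨t, i, rfl⟩ := hy
      apply one_le
      simp only [hx, inner_sub_left, inner_sub_right, inner_add_left, inner_add_right,
        real_inner_smul_left, real_inner_smul_right, hbb, haa, hcc, hba, hab, hbc, hcb,
        hac, hca]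
      by_cases hst : s = t
      · subst hst
        by_cases hli : ℓ = i
        · subst hli; simp; norm_num
        · have h3 : g s ℓ ≠ g s i := fun h => hli (hg s h)
          have h2 : i ≠ ℓ := fun h => hli h.symm
          have h4 : g s i ≠ g s ℓ := fun h => h3 h.symm
          simp [hli, h2, h3, h4]; norm_num
      · split_ifs <;> norm_num
    · simp only [Set.mem_singleton_iff] at hy
      subst hy
      apply one_le
      simp only [hx, sub_zero, inner_sub_left, inner_sub_right, inner_add_left, inner_add_right,
        real_inner_smul_left, real_inner_smul_right, hbb, haa, hcc, hba, hab, hbc, hcb,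
        hac, hca]
      simp; norm_num
  refine ⟨?_, hlb, heq⟩
  have hmem : (c s + b ℓ + (1/2 : ℝ) • a (g s ℓ)) ∈ N := by
    rw [hN]; exact Or.inl ⟨s, ℓ, rfl⟩
  have hne : N.Nonempty := ⟨_, hmem⟩
  refine le_antisymm ?_ ?_
  · calc Metric.infDist x N ≤ dist x (c s + b ℓ + (1/2 : ℝ) • a (g s ℓ)) :=
        Metric.infDist_le_dist_of_mem hmem
      _ = 1 := by rw [dist_eq_norm, heq]
  · by_contra hlt
    push_neg at hlt
    obtain ⟨y, hy, hdy⟩ := (Metric.infDist_lt_iff hne).mp hlt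
    rw [dist_eq_norm] at hdy
    exact absurd (hlb y hy) (by linarith)
end

section
/- Let H be a real Hilbert space and let { b_n : n ∈ ℕ } ∪ { c_{n,i} : n, i ∈ ℕ } ∪ { a_f : f ∈ ℕ^ℕ } be an orthonormal family in H (all vectors pairwise distinct and orthonormal, indexed injectively). Let N = { a_g + b_m + (1/2) c_{m, g(m)} : m ∈ ℕ, g ∈ ℕ^ℕ } ∪ {0}. Then for every f ∈ ℕ^ℕ and every n ∈ ℕ, dist( a_f + b_n − (1/2) c_{n, f(n)}, N ) = 1; in particular ‖(a_f + b_n − (1/2) c_{n,f(n)}) − y‖ ≥ 1 for every y ∈ N, with equality for y = a_f + b_n + (1/2) c_{n,f(n)}. -/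
open RealInnerProductSpace

/-- Claim 2 (consistency of paths) in the proof that `T_N` has `TP₂`: with an orthonormal
family `{bₙ} ∪ {c_{n,i}} ∪ {a_f}` and black set
`N = {a_g + bₘ + (1/2)c_{m,g(m)} : m ∈ ℕ, g ∈ ℕ^ℕ} ∪ {0}`, for every `f` and `n`,
`dist(a_f + bₙ − (1/2)c_{n,f(n)}, N) = 1`; every point of `N` is at distance `≥ 1`, with
equality at `a_f + bₙ + (1/2)c_{n,f(n)}`. -/
theorem stmt14 {H : Type*} [NormedAddCommGroup H] [InnerProductSpace ℝ H] [CompleteSpace H]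
    (b : ℕ → H) (c : ℕ × ℕ → H) (a : (ℕ → ℕ) → H)
    (hon : Orthonormal ℝ (Sum.elim b (Sum.elim c a)))
    (N : Set H)
    (hN : N = {x : H | ∃ (g : ℕ → ℕ) (m : ℕ), x = a g + b m + (1/2 : ℝ) • c (m, g m)} ∪ {0}) :
    ∀ (f : ℕ → ℕ) (n : ℕ),
      Metric.infDist (a f + b n - (1/2 : ℝ) • c (n, f n)) N = 1 ∧
      (∀ y ∈ N, 1 ≤ ‖(a f + b n - (1/2 : ℝ) • c (n, f n)) - y‖) ∧
      ‖(a f + b n - (1/2 : ℝ) • c (n, f n)) - (a f + b n + (1/2 : ℝ) • c (n, f n))‖ = 1 := by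
  intro f n
  subst hN
  have hunit : ∀ i, ‖Sum.elim b (Sum.elim c a) i‖ = 1 := hon.1
  have horth : ∀ {i j}, i ≠ j →
      ⟪Sum.elim b (Sum.elim c a) i, Sum.elim b (Sum.elim c a) j⟫ = 0 := fun h => hon.2 h
  have haa : ∀ g g' : ℕ → ℕ, g ≠ g' → ⟪a g, a g'⟫ = 0 := fun g g' h =>
    horth (i := Sum.inr (Sum.inr g)) (j := Sum.inr (Sum.inr g')) (by simp [h])
  have haa' : ∀ g : ℕ → ℕ, ⟪a g, a g⟫ = 1 := fun g => by
    have := hunit (Sum.inr (Sum.inr g))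
    simp only [Sum.elim_inr] at this
    rw [real_inner_self_eq_norm_sq, this]; norm_num
  have hab : ∀ (g : ℕ → ℕ) (m : ℕ), ⟪a g, b m⟫ = 0 := fun g m =>
    horth (i := Sum.inr (Sum.inr g)) (j := Sum.inl m) (by simp)
  have hac : ∀ (g : ℕ → ℕ) (p : ℕ × ℕ), ⟪a g, c p⟫ = 0 := fun g p =>
    horth (i := Sum.inr (Sum.inr g)) (j := Sum.inr (Sum.inl p)) (by simp)
  have hba : ∀ (m : ℕ) (g : ℕ → ℕ), ⟪b m, a g⟫ = 0 := fun m g => by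
    rw [real_inner_comm]; exact hab g m
  have hbb : ∀ m m' : ℕ, m ≠ m' → ⟪b m, b m'⟫ = 0 := fun m m' h =>
    horth (i := Sum.inl m) (j := Sum.inl m') (by simp [h])
  have hbb' : ∀ m : ℕ, ⟪b m, b m⟫ = 1 := fun m => by
    have := hunit (Sum.inl m)
    simp only [Sum.elim_inl] at this
    rw [real_inner_self_eq_norm_sq, this]; norm_num
  have hbc : ∀ (m : ℕ) (p : ℕ × ℕ), ⟪b m, c p⟫ = 0 := fun m p =>
    horth (i := Sum.inl m) (j := Sum.inr (Sum.inl p)) (by simp)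
  have hcnorm : ∀ p : ℕ × ℕ, ‖c p‖ = 1 := fun p => by
    have := hunit (Sum.inr (Sum.inl p)); simpa using this
  set x : H := a f + b n - (1/2 : ℝ) • c (n, f n) with hx
  set y₀ : H := a f + b n + (1/2 : ℝ) • c (n, f n) with hy₀
  have hdiff : x - y₀ = -c (n, f n) := by rw [hx, hy₀]; module
  have heq : ‖x - y₀‖ = 1 := by rw [hdiff, norm_neg, hcnorm]
  have hy₀mem : y₀ ∈ ({x : H | ∃ (g : ℕ → ℕ) (m : ℕ),
      x = a g + b m + (1/2 : ℝ) • c (m, g m)} ∪ {0} : Set H) := Or.inl ⟨f, n, rfl⟩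
  have hlow : ∀ y ∈ ({x : H | ∃ (g : ℕ → ℕ) (m : ℕ),
      x = a g + b m + (1/2 : ℝ) • c (m, g m)} ∪ {0} : Set H), 1 ≤ ‖x - y‖ := by
    rintro y (⟨g, m, rfl⟩ | rfl)
    · by_cases hfg : f = g
      · subst hfg
        by_cases hnm : n = m
        · subst hnm
          have : x - (a f + b n + (1/2 : ℝ) • c (n, f n)) = -c (n, f n) := by
            rw [hx]; module
          rw [this, norm_neg, hcnorm]
        · -- use inner with b n
          have hinner : ⟪b n, x - (a f + b m + (1/2 : ℝ) • c (m, f m))⟫ = 1 := by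
            rw [hx]
            simp [inner_sub_right, inner_add_right, inner_smul_right, hba, hbb n m hnm,
              hbb', hbc]
            exact Or.inl (by simpa using hunit (Sum.inl n))
          have := abs_real_inner_le_norm (b n) (x - (a f + b m + (1/2 : ℝ) • c (m, f m)))
          rw [hinner] at this
          have hbn : ‖b n‖ = 1 := by simpa using hunit (Sum.inl n)
          rw [hbn, one_mul] at this
          simpa using this
      · -- use inner with a f
        have hinner : ⟪a f, x - (a g + b m + (1/2 : ℝ) • c (m, g m))⟫ = 1 := by
          rw [hx]
          simp [inner_sub_right, inner_add_right, inner_smul_right, haa f g hfg, haa',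
            hab, hac]
          exact Or.inl (by simpa using hunit (Sum.inr (Sum.inr f)))
        have := abs_real_inner_le_norm (a f) (x - (a g + b m + (1/2 : ℝ) • c (m, g m)))
        rw [hinner] at this
        have han : ‖a f‖ = 1 := by simpa using hunit (Sum.inr (Sum.inr f))
        rw [han, one_mul] at this
        simpa using this
    · have hinner : ⟪a f, x - 0⟫ = 1 := by
        rw [hx]
        simp [inner_sub_right, inner_add_right, inner_smul_right, haa', hab, hac]
        exact Or.inl (by simpa using hunit (Sum.inr (Sum.inr f)))
      have := abs_real_inner_le_norm (a f) (x - 0)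
      rw [hinner] at this
      have han : ‖a f‖ = 1 := by simpa using hunit (Sum.inr (Sum.inr f))
      rw [han, one_mul] at this
      simpa using this
  refine ⟨le_antisymm ?_ ?_, hlow, heq⟩
  · calc Metric.infDist x _ ≤ dist x y₀ := Metric.infDist_le_dist_of_mem hy₀mem
      _ = 1 := by rw [dist_eq_norm, heq]
  · haveI : Nonempty ↑({x : H | ∃ (g : ℕ → ℕ) (m : ℕ),
        x = a g + b m + (1/2 : ℝ) • c (m, g m)} ∪ {0}) := ⟨⟨0, Or.inr rfl⟩⟩
    rw [Metric.infDist_eq_iInf]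
    refine le_ciInf fun ⟨y, hy⟩ => ?_
    rw [dist_eq_norm]
    exact hlow y hy
end

section
/- Let H be a real Hilbert space and let C ⊆ E and C ⊆ F be closed subspaces. Then the following are equivalent: (i) P_F(a) = P_C(a) for every a ∈ E; (ii) P_E(b) = P_C(b) for every b ∈ F; (iii) every vector of E ∩ C^⊥ is orthogonal to every vector of F ∩ C^⊥. -/
open scoped RealInnerProductSpace

private lemma aux15 {H : Type*} [NormedAddCommGroup H] [InnerProductSpace ℝ H] [CompleteSpace H]
    (C E F : Submodule ℝ H) [CompleteSpace C] [CompleteSpace F]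
    (hCE : C ≤ E) (hCF : C ≤ F) :
    (∀ a ∈ E, (Submodule.orthogonalProjectionOnto F a : H) = (Submodule.orthogonalProjectionOnto C a : H)) ↔
      (∀ x ∈ E ⊓ Cᗮ, ∀ y ∈ F ⊓ Cᗮ, ⟪x, y⟫ = 0) := by
  constructor
  · intro h x hx y hy
    obtain ⟨hxE, hxC⟩ := hx
    obtain ⟨hyF, hyC⟩ := hy
    have h1 : (Submodule.orthogonalProjectionOnto F x : H) = Submodule.orthogonalProjectionOnto C x := h x hxE
    have h2 : (Submodule.orthogonalProjectionOnto C x : H) = 0 :=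
      congrArg _ (Submodule.orthogonalProjectionOnto_apply_of_mem_orthogonal hxC)
    have h3 : x - Submodule.orthogonalProjectionOnto F x ∈ Fᗮ := Submodule.sub_starProjection_mem_orthogonal x
    have h4 : ⟪x - Submodule.orthogonalProjectionOnto F x, y⟫ = 0 := by
      rw [real_inner_comm]; exact h3 y hyF
    have : ⟪x, y⟫ = ⟪(Submodule.orthogonalProjectionOnto F x : H), y⟫ := by
      have := inner_sub_left (𝕜 := ℝ) x (Submodule.orthogonalProjectionOnto F x : H) y
      rw [h4] at this
      linarith
    rw [this, h1, h2, inner_zero_left]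
  · intro h a haE
    set c : H := (Submodule.orthogonalProjectionOnto C a : H) with hc
    have hcC : c ∈ C := (Submodule.orthogonalProjectionOnto C a).2
    have hd : a - c ∈ Cᗮ := Submodule.sub_starProjection_mem_orthogonal a
    have hdE : a - c ∈ E := Submodule.sub_mem E haE (hCE hcC)
    have hdF : a - c ∈ Fᗮ := by
      intro y hyF
      have hyc : y - Submodule.orthogonalProjectionOnto C y ∈ F ⊓ Cᗮ :=
        ⟨Submodule.sub_mem F hyF (hCF (Submodule.orthogonalProjectionOnto C y).2),
          Submodule.sub_starProjection_mem_orthogonal y⟩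
      have h1 : ⟪a - c, y - Submodule.orthogonalProjectionOnto C y⟫ = 0 := h _ ⟨hdE, hd⟩ _ hyc
      have h2 : ⟪a - c, (Submodule.orthogonalProjectionOnto C y : H)⟫ = 0 := by
        have := hd _ (Submodule.orthogonalProjectionOnto C y).2
        simpa [real_inner_comm] using this
      have := inner_sub_right (𝕜 := ℝ) (a - c) y (Submodule.orthogonalProjectionOnto C y : H)
      rw [h1, h2] at this
      have : ⟪a - c, y⟫ = 0 := by linarith
      simpa [real_inner_comm] using this
    have : Submodule.orthogonalProjectionOnto F a = Submodule.orthogonalProjectionOnto F (c + (a - c)) := by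
      rw [add_sub_cancel]
    rw [this, map_add]
    have hcF : (Submodule.orthogonalProjectionOnto F c : H) = c :=
      Submodule.starProjection_eq_self_iff.mpr (hCF hcC)
    have hdF0 : Submodule.orthogonalProjectionOnto F (a - c) = 0 :=
      Submodule.orthogonalProjectionOnto_apply_of_mem_orthogonal hdF
    push_cast [hdF0]
    rw [hcF]
    simp

/-- Equivalent formulations of Hilbert-space independence of `E` and `F` over a common
closed subspace `C`: (i) `P_F = P_C` on `E`; (ii) `P_E = P_C` on `F`;
(iii) `E ⊓ Cᗮ ⟂ F ⊓ Cᗮ`. -/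
theorem stmt15 {H : Type*} [NormedAddCommGroup H] [InnerProductSpace ℝ H] [CompleteSpace H]
    (C E F : Submodule ℝ H) [CompleteSpace C] [CompleteSpace E] [CompleteSpace F]
    (hCE : C ≤ E) (hCF : C ≤ F) :
    ((∀ a ∈ E, (Submodule.orthogonalProjectionOnto F a : H) = (Submodule.orthogonalProjectionOnto C a : H)) ↔
      (∀ b ∈ F, (Submodule.orthogonalProjectionOnto E b : H) = (Submodule.orthogonalProjectionOnto C b : H))) ∧
    ((∀ a ∈ E, (Submodule.orthogonalProjectionOnto F a : H) = (Submodule.orthogonalProjectionOnto C a : H)) ↔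
      (∀ x ∈ E ⊓ Cᗮ, ∀ y ∈ F ⊓ Cᗮ, ⟪x, y⟫ = 0)) := by
  have h1 := aux15 C E F hCE hCF
  have h2 := aux15 C F E hCF hCE
  have hsym : (∀ x ∈ E ⊓ Cᗮ, ∀ y ∈ F ⊓ Cᗮ, ⟪x, y⟫ = 0) ↔
      (∀ x ∈ F ⊓ Cᗮ, ∀ y ∈ E ⊓ Cᗮ, ⟪x, y⟫ = 0) := by
    constructor <;> intro h x hx y hy <;>
      · rw [real_inner_comm]; exact h y hy x hx
  exact ⟨h1.trans (hsym.trans h2.symm), h1⟩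
end

section
/- Let H be a real Hilbert space and let H_0 ⊆ H_1 and H_0 ⊆ H_2 be closed subspaces such that every vector of H_1 ∩ H_0^⊥ is orthogonal to every vector of H_2 ∩ H_0^⊥. Let d_1 : H_1 → [0,1] and d_2 : H_2 → [0,1] each satisfy axiom (2) on their domains (d_i(y) ≤ d_i(x) + ‖x − y‖), suppose d_1 and d_2 agree on H_0, and suppose their common restriction d_0 to H_0 satisfies axiom (1) on H_0 (for every x ∈ H_0 with d_0(x) < 1 and every ε > 0 there is y ∈ H_0 with d_0(y) ≤ ε and |d_0(x) − ‖x − y‖| ≤ ε). Define, for v in the closure H_3 of H_1 + H_2, d_3(v) = min( sqrt( d_1(P_{H_1}(v))² + ‖P_{H_2 ∩ H_0^⊥}(v)‖² ), sqrt( d_2(P_{H_2}(v))² + ‖P_{H_1 ∩ H_0^⊥}(v)‖² ) ). Then d_3(v) = d_1(v) for every v ∈ H_1 and d_3(v) = d_2(v) for every v ∈ H_2. -/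
open scoped RealInnerProductSpace

private lemma sqrt_aux {a b ε : ℝ} (ha : 0 ≤ a) (hε : 0 ≤ ε) :
    Real.sqrt (b ^ 2 + (a + ε) ^ 2) ≤ Real.sqrt (a ^ 2 + b ^ 2) + ε := by
  have hsq := Real.sq_sqrt (show (0:ℝ) ≤ a ^ 2 + b ^ 2 by positivity)
  have hs : a ≤ Real.sqrt (a ^ 2 + b ^ 2) := by
    nlinarith [Real.sqrt_nonneg (a ^ 2 + b ^ 2)]
  have hs0 : 0 ≤ Real.sqrt (a ^ 2 + b ^ 2) := Real.sqrt_nonneg _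
  calc Real.sqrt (b ^ 2 + (a + ε) ^ 2)
      ≤ Real.sqrt ((Real.sqrt (a ^ 2 + b ^ 2) + ε) ^ 2) := by
        apply Real.sqrt_le_sqrt
        have := Real.sq_sqrt (show (0:ℝ) ≤ a ^ 2 + b ^ 2 by positivity)
        nlinarith
    _ = Real.sqrt (a ^ 2 + b ^ 2) + ε := Real.sqrt_sq (by linarith)

private lemma amalg_aux {H : Type*} [NormedAddCommGroup H] [InnerProductSpace ℝ H]
    (H0 A B : Submodule ℝ H)
    [CompleteSpace H0] [CompleteSpace A] [CompleteSpace B]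
    [CompleteSpace ↥(A ⊓ H0ᗮ)] [CompleteSpace ↥(B ⊓ H0ᗮ)]
    (h0A : H0 ≤ A) (h0B : H0 ≤ B)
    (horth : ∀ x ∈ A ⊓ H0ᗮ, ∀ y ∈ B ⊓ H0ᗮ, ⟪x, y⟫ = 0)
    (dA dB : H → ℝ)
    (hrA : ∀ x ∈ A, dA x ∈ Set.Icc (0 : ℝ) 1)
    (ax2A : ∀ x ∈ A, ∀ y ∈ A, dA y ≤ dA x + ‖x - y‖)
    (hagree : ∀ x ∈ H0, dA x = dB x)
    (ax1 : ∀ x ∈ H0, dA x < 1 → ∀ ε > 0, ∃ y ∈ H0, dA y ≤ ε ∧ |dA x - ‖x - y‖| ≤ ε)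
    (v : H) (hv : v ∈ A) :
    min (Real.sqrt (dA ((Submodule.orthogonalProjectionOnto A v : H)) ^ 2 +
          ‖(Submodule.orthogonalProjectionOnto (B ⊓ H0ᗮ) v : H)‖ ^ 2))
        (Real.sqrt (dB ((Submodule.orthogonalProjectionOnto B v : H)) ^ 2 +
          ‖(Submodule.orthogonalProjectionOnto (A ⊓ H0ᗮ) v : H)‖ ^ 2)) = dA v := by
  set x : H := (Submodule.orthogonalProjectionOnto H0 v : H) with hx
  have hxH0 : x ∈ H0 := (Submodule.orthogonalProjectionOnto H0 v).2
  have hu0 : v - x ∈ H0ᗮ := Submodule.sub_starProjection_mem_orthogonal (K := H0) v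
  have huA : v - x ∈ A ⊓ H0ᗮ := ⟨A.sub_mem hv (h0A hxH0), hu0⟩
  -- projection onto A is v itself
  have hPA : (Submodule.orthogonalProjectionOnto A v : H) = v := Submodule.starProjection_eq_self_iff.mpr hv
  -- v is orthogonal to B ⊓ H0ᗮ
  have hPB0 : (Submodule.orthogonalProjectionOnto (B ⊓ H0ᗮ) v : H) = 0 := by
    have : v ∈ (B ⊓ H0ᗮ)ᗮ := by
      intro w hw
      have h1 : ⟪w, x⟫ = 0 := by rw [real_inner_comm]; exact hw.2 x hxH0
      have h2 : ⟪v - x, w⟫ = 0 := horth _ huA w hw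
      have h2' : ⟪w, v - x⟫ = 0 := by rwa [real_inner_comm]
      have : ⟪w, v⟫ = ⟪w, x⟫ + ⟪w, v - x⟫ := by
        rw [← inner_add_right, add_sub_cancel]
      rw [this, h1, h2', add_zero]
    exact congrArg Subtype.val (Submodule.orthogonalProjectionOnto_apply_of_mem_orthogonal this)
  -- projection onto B is x
  have hPB : (Submodule.orthogonalProjectionOnto B v : H) = x := by
    apply Submodule.eq_starProjection_of_mem_of_inner_eq_zero (h0B hxH0)
    intro w hw
    have hw0 : w - (Submodule.orthogonalProjectionOnto H0 w : H) ∈ B ⊓ H0ᗮ :=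
      ⟨B.sub_mem hw (h0B (Submodule.orthogonalProjectionOnto H0 w).2),
        Submodule.sub_starProjection_mem_orthogonal (K := H0) w⟩
    have h1 : ⟪v - x, (Submodule.orthogonalProjectionOnto H0 w : H)⟫ = 0 := by
      rw [real_inner_comm]; exact hu0 _ (Submodule.orthogonalProjectionOnto H0 w).2
    have h2 : ⟪v - x, w - (Submodule.orthogonalProjectionOnto H0 w : H)⟫ = 0 := horth _ huA _ hw0
    have : ⟪v - x, w⟫ =
        ⟪v - x, (Submodule.orthogonalProjectionOnto H0 w : H)⟫ +
        ⟪v - x, w - (Submodule.orthogonalProjectionOnto H0 w : H)⟫ := by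
      rw [← inner_add_right, add_sub_cancel]
    rw [this, h1, h2, add_zero]
  -- projection onto A ⊓ H0ᗮ is v - x
  have hPA0 : (Submodule.orthogonalProjectionOnto (A ⊓ H0ᗮ) v : H) = v - x := by
    apply Submodule.eq_starProjection_of_mem_of_inner_eq_zero huA
    intro w hw
    have : v - (v - x) = x := sub_sub_cancel v x
    rw [this]
    exact (real_inner_comm x w) ▸ hw.2 x hxH0
  rw [hPA, hPB0, hPB, hPA0]
  have hdv := hrA v hv
  have hdx := hrA x (h0A hxH0)
  set a : ℝ := dA x with ha
  set b : ℝ := ‖v - x‖ with hb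
  have hb0 : (0:ℝ) ≤ b := norm_nonneg _
  have key : dA v ≤ Real.sqrt (a ^ 2 + b ^ 2) := by
    by_cases hlt : a < 1
    · -- approximation argument
      apply le_of_forall_pos_le_add
      intro δ hδ
      obtain ⟨y, hy0, hdy, hxy⟩ := ax1 x hxH0 hlt (δ/2) (by linarith)
      have hxy' : ‖x - y‖ ≤ a + δ/2 := by
        have := abs_le.mp hxy; linarith [this.1]
      have hxy0 : (0:ℝ) ≤ ‖x - y‖ := norm_nonneg _
      -- Pythagoras: ‖v - y‖² = b² + ‖x - y‖²
      have hperp : ⟪v - x, x - y⟫ = 0 := by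
        rw [real_inner_comm]; exact hu0 _ (H0.sub_mem hxH0 hy0)
      have hpy : ‖v - y‖ ^ 2 = b ^ 2 + ‖x - y‖ ^ 2 := by
        have hd : v - y = (v - x) + (x - y) := by abel
        rw [hd, norm_add_sq_real, hperp]
        ring
      have hvy : ‖v - y‖ = Real.sqrt (b ^ 2 + ‖x - y‖ ^ 2) := by
        rw [← hpy, Real.sqrt_sq (norm_nonneg _)]
      have step1 : dA v ≤ dA y + ‖y - v‖ := ax2A y (h0A hy0) v hv
      have hsym : ‖y - v‖ = ‖v - y‖ := norm_sub_rev _ _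
      have step2 : Real.sqrt (b ^ 2 + ‖x - y‖ ^ 2) ≤ Real.sqrt (b ^ 2 + (a + δ/2) ^ 2) := by
        apply Real.sqrt_le_sqrt; nlinarith [hdx.1]
      have step3 : Real.sqrt (b ^ 2 + (a + δ/2) ^ 2) ≤ Real.sqrt (a ^ 2 + b ^ 2) + δ/2 :=
        sqrt_aux hdx.1 (by linarith)
      calc dA v ≤ dA y + ‖v - y‖ := by rw [← hsym]; exact step1
        _ ≤ δ/2 + (Real.sqrt (a ^ 2 + b ^ 2) + δ/2) := by
            rw [hvy]; exact add_le_add hdy (step2.trans step3)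
        _ = Real.sqrt (a ^ 2 + b ^ 2) + δ := by ring
    · -- a = 1 case: sqrt ≥ 1 ≥ dA v
      have ha1 : (1:ℝ) ≤ a := not_lt.mp hlt
      calc dA v ≤ 1 := hdv.2
        _ = Real.sqrt 1 := (Real.sqrt_one).symm
        _ ≤ Real.sqrt (a ^ 2 + b ^ 2) := Real.sqrt_le_sqrt (by nlinarith)
  have h1 : Real.sqrt (dA v ^ 2 + ‖(0:H)‖ ^ 2) = dA v := by
    simp [Real.sqrt_sq hdv.1]
  rw [h1, ← hagree x hxH0]
  exact min_eq_left key

/-- Free amalgamation lemma for the class `K_r` of models of `T₀`: the amalgamated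
distance function `d₃` on the closure `H₃` of `H₁ + H₂` extends both `d₁` and `d₂`. -/
theorem stmt16 {H : Type*} [NormedAddCommGroup H] [InnerProductSpace ℝ H] [CompleteSpace H]
    (H0 H1 H2 : Submodule ℝ H)
    [CompleteSpace H0] [CompleteSpace H1] [CompleteSpace H2]
    [CompleteSpace ↥(H1 ⊓ H0ᗮ)] [CompleteSpace ↥(H2 ⊓ H0ᗮ)]
    (h01 : H0 ≤ H1) (h02 : H0 ≤ H2)
    (horth : ∀ x ∈ H1 ⊓ H0ᗮ, ∀ y ∈ H2 ⊓ H0ᗮ, ⟪x, y⟫ = 0)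
    (d1 d2 : H → ℝ)
    (hr1 : ∀ x ∈ H1, d1 x ∈ Set.Icc (0 : ℝ) 1)
    (hr2 : ∀ x ∈ H2, d2 x ∈ Set.Icc (0 : ℝ) 1)
    (ax2_1 : ∀ x ∈ H1, ∀ y ∈ H1, d1 y ≤ d1 x + ‖x - y‖)
    (ax2_2 : ∀ x ∈ H2, ∀ y ∈ H2, d2 y ≤ d2 x + ‖x - y‖)
    (hagree : ∀ x ∈ H0, d1 x = d2 x)
    (ax1_0 : ∀ x ∈ H0, d1 x < 1 → ∀ ε > 0, ∃ y ∈ H0, d1 y ≤ ε ∧ |d1 x - ‖x - y‖| ≤ ε)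
    (d3 : H → ℝ)
    (hd3 : ∀ v ∈ (H1 ⊔ H2).topologicalClosure,
      d3 v = min
        (Real.sqrt (d1 ((Submodule.orthogonalProjectionOnto H1 v : H)) ^ 2 +
          ‖(Submodule.orthogonalProjectionOnto (H2 ⊓ H0ᗮ) v : H)‖ ^ 2))
        (Real.sqrt (d2 ((Submodule.orthogonalProjectionOnto H2 v : H)) ^ 2 +
          ‖(Submodule.orthogonalProjectionOnto (H1 ⊓ H0ᗮ) v : H)‖ ^ 2))) :
    (∀ v ∈ H1, d3 v = d1 v) ∧ (∀ v ∈ H2, d3 v = d2 v) := by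
  have hle : H1 ⊔ H2 ≤ (H1 ⊔ H2).topologicalClosure := Submodule.le_topologicalClosure _
  have horth' : ∀ x ∈ H2 ⊓ H0ᗮ, ∀ y ∈ H1 ⊓ H0ᗮ, ⟪x, y⟫ = 0 := by
    intro x hx y hy; rw [real_inner_comm]; exact horth y hy x hx
  have hagree' : ∀ x ∈ H0, d2 x = d1 x := fun x hx => (hagree x hx).symm
  have ax1_0' : ∀ x ∈ H0, d2 x < 1 → ∀ ε > 0, ∃ y ∈ H0, d2 y ≤ ε ∧ |d2 x - ‖x - y‖| ≤ ε := by
    intro x hx hlt ε hε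
    obtain ⟨y, hy0, h1, h2⟩ := ax1_0 x hx (by rwa [hagree x hx]) ε hε
    exact ⟨y, hy0, by rwa [← hagree y hy0], by rwa [← hagree x hx]⟩
  constructor
  · intro v hv
    rw [hd3 v (hle (le_sup_left (b := H2) hv))]
    exact amalg_aux H0 H1 H2 h01 h02 horth d1 d2 hr1 ax2_1 hagree ax1_0 v hv
  · intro v hv
    rw [hd3 v (hle (le_sup_right (a := H1) hv)), min_comm]
    exact amalg_aux H0 H2 H1 h02 h01 horth' d2 d1 hr2 ax2_2 hagree' ax1_0' v hv
end

section
/- Let H be a real Hilbert space and let H_0 ⊆ H_1 and H_0 ⊆ H_2 be closed subspaces such that every vector of H_1 ∩ H_0^⊥ is orthogonal to every vector of H_2 ∩ H_0^⊥. Let d_1 : H_1 → [0,1] and d_2 : H_2 → [0,1] each satisfy d_i(y) ≤ d_i(x) + ‖x − y‖ on their domains. Define, for v in the closure H_3 of H_1 + H_2, d_3(v) = min( sqrt( d_1(P_{H_1}(v))² + ‖P_{H_2 ∩ H_0^⊥}(v)‖² ), sqrt( d_2(P_{H_2}(v))² + ‖P_{H_1 ∩ H_0^⊥}(v)‖² )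 ). Then d_3 satisfies axiom (2) on H_3: d_3(y) ≤ d_3(x) + ‖x − y‖ for all x, y ∈ H_3. -/
open scoped RealInnerProductSpace

private lemma aux_sqrt_tri (a b u w a' b' c : ℝ) (ha : 0 ≤ a) (hb : 0 ≤ b)
    (hu : 0 ≤ u) (hw : 0 ≤ w) (ha' : 0 ≤ a') (hb' : 0 ≤ b')
    (h1 : a' ≤ a + u) (h2 : b' ≤ b + w)
    (hc : Real.sqrt (u ^ 2 + w ^ 2) ≤ c) :
    Real.sqrt (a' ^ 2 + b' ^ 2) ≤ Real.sqrt (a ^ 2 + b ^ 2) + c := by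
  set S := Real.sqrt (a ^ 2 + b ^ 2) with hSdef
  set T := Real.sqrt (u ^ 2 + w ^ 2) with hTdef
  have hS0 : 0 ≤ S := Real.sqrt_nonneg _
  have hT0 : 0 ≤ T := Real.sqrt_nonneg _
  have hS : S ^ 2 = a ^ 2 + b ^ 2 := Real.sq_sqrt (by positivity)
  have hT : T ^ 2 = u ^ 2 + w ^ 2 := Real.sq_sqrt (by positivity)
  have hST : a * u + b * w ≤ S * T := by
    nlinarith [sq_nonneg (a * w - b * u), sq_nonneg (S * T - a * u - b * w),
      mul_nonneg hS0 hT0]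
  have key : Real.sqrt (a' ^ 2 + b' ^ 2) ≤ S + T := by
    rw [show S + T = Real.sqrt ((S + T) ^ 2) from
      (Real.sqrt_sq (by positivity)).symm]
    apply Real.sqrt_le_sqrt
    nlinarith
  linarith

/-- The amalgamated distance function `d₃` satisfies axiom (2) (the 1-Lipschitz condition)
on the closure `H₃` of `H₁ + H₂`. -/
theorem stmt17 {H : Type*} [NormedAddCommGroup H] [InnerProductSpace ℝ H] [CompleteSpace H]
    (H0 H1 H2 : Submodule ℝ H)
    [CompleteSpace H0] [CompleteSpace H1] [CompleteSpace H2]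
    [CompleteSpace ↥(H1 ⊓ H0ᗮ)] [CompleteSpace ↥(H2 ⊓ H0ᗮ)]
    (h01 : H0 ≤ H1) (h02 : H0 ≤ H2)
    (horth : ∀ x ∈ H1 ⊓ H0ᗮ, ∀ y ∈ H2 ⊓ H0ᗮ, ⟪x, y⟫ = 0)
    (d1 d2 : H → ℝ)
    (hr1 : ∀ x ∈ H1, d1 x ∈ Set.Icc (0 : ℝ) 1)
    (hr2 : ∀ x ∈ H2, d2 x ∈ Set.Icc (0 : ℝ) 1)
    (ax2_1 : ∀ x ∈ H1, ∀ y ∈ H1, d1 y ≤ d1 x + ‖x - y‖)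
    (ax2_2 : ∀ x ∈ H2, ∀ y ∈ H2, d2 y ≤ d2 x + ‖x - y‖)
    (d3 : H → ℝ)
    (hd3 : ∀ v ∈ (H1 ⊔ H2).topologicalClosure,
      d3 v = min
        (Real.sqrt (d1 ((Submodule.orthogonalProjectionOnto H1 v : H)) ^ 2 +
          ‖(Submodule.orthogonalProjectionOnto (H2 ⊓ H0ᗮ) v : H)‖ ^ 2))
        (Real.sqrt (d2 ((Submodule.orthogonalProjectionOnto H2 v : H)) ^ 2 +
          ‖(Submodule.orthogonalProjectionOnto (H1 ⊓ H0ᗮ) v : H)‖ ^ 2))) :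
    ∀ x ∈ (H1 ⊔ H2).topologicalClosure, ∀ y ∈ (H1 ⊔ H2).topologicalClosure,
      d3 y ≤ d3 x + ‖x - y‖ := by
  -- H2 ⊓ H0ᗮ is orthogonal to H1, and symmetrically
  have hperp2 : H2 ⊓ H0ᗮ ≤ H1ᗮ := by
    intro w hw
    intro u hu
    have hu0 : (Submodule.orthogonalProjectionOnto H0 u : H) ∈ H0 := SetLike.coe_mem _
    have hrest : u - Submodule.orthogonalProjectionOnto H0 u ∈ H1 ⊓ H0ᗮ := by
      refine ⟨?_, Submodule.sub_starProjection_mem_orthogonal u⟩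
      exact Submodule.sub_mem _ hu (h01 hu0)
    have h1 : ⟪u - Submodule.orthogonalProjectionOnto H0 u, w⟫ = 0 := horth _ hrest _ hw
    have h2 : ⟪(Submodule.orthogonalProjectionOnto H0 u : H), w⟫ = 0 := hw.2 _ hu0
    have h3 := inner_sub_left (𝕜 := ℝ) u (Submodule.orthogonalProjectionOnto H0 u : H) w
    rw [h1, h2] at h3
    linarith
  have hperp1 : H1 ⊓ H0ᗮ ≤ H2ᗮ := by
    intro w hw
    intro u hu
    have hu0 : (Submodule.orthogonalProjectionOnto H0 u : H) ∈ H0 := SetLike.coe_mem _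
    have hrest : u - Submodule.orthogonalProjectionOnto H0 u ∈ H2 ⊓ H0ᗮ := by
      refine ⟨?_, Submodule.sub_starProjection_mem_orthogonal u⟩
      exact Submodule.sub_mem _ hu (h02 hu0)
    have h1 : ⟪w, u - Submodule.orthogonalProjectionOnto H0 u⟫ = 0 := horth _ hw _ hrest
    have h2 : ⟪(Submodule.orthogonalProjectionOnto H0 u : H), w⟫ = 0 := hw.2 _ hu0
    have h1' : ⟪u - Submodule.orthogonalProjectionOnto H0 u, w⟫ = 0 := by
      rw [real_inner_comm]; exact h1
    have h3 := inner_sub_left (𝕜 := ℝ) u (Submodule.orthogonalProjectionOnto H0 u : H) w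
    rw [h1', h2] at h3
    linarith
  -- key Pythagorean bound
  have pyth : ∀ (K L : Submodule ℝ H) (_ : CompleteSpace K) (_ : CompleteSpace L),
      L ≤ Kᗮ → ∀ z : H,
      Real.sqrt (‖(Submodule.orthogonalProjectionOnto K z : H)‖ ^ 2 +
        ‖(Submodule.orthogonalProjectionOnto L z : H)‖ ^ 2) ≤ ‖z‖ := by
    intro K L _ _ hKL z
    have hz : z = (Submodule.orthogonalProjectionOnto K z : H) + (z - Submodule.orthogonalProjectionOnto K z) := by abel
    have hmem : z - Submodule.orthogonalProjectionOnto K z ∈ Kᗮ := Submodule.sub_starProjection_mem_orthogonal z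
    have hinner : ⟪(Submodule.orthogonalProjectionOnto K z : H), z - Submodule.orthogonalProjectionOnto K z⟫ = 0 :=
      hmem _ (SetLike.coe_mem _)
    have hsum : ‖z‖ ^ 2 = ‖(Submodule.orthogonalProjectionOnto K z : H)‖ ^ 2 +
        ‖z - Submodule.orthogonalProjectionOnto K z‖ ^ 2 := by
      conv_lhs => rw [hz]
      rw [norm_add_sq_real, hinner]
      ring
    -- L-projection of z equals that of the remainder
    have hLK : (Submodule.orthogonalProjectionOnto L (Submodule.orthogonalProjectionOnto K z : H)) = 0 := by
      apply Submodule.orthogonalProjectionOnto_apply_of_mem_orthogonal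
      intro v hv
      rw [real_inner_comm]
      exact hKL hv _ (SetLike.coe_mem _)
    have hLz : (Submodule.orthogonalProjectionOnto L z : H) =
        (Submodule.orthogonalProjectionOnto L (z - Submodule.orthogonalProjectionOnto K z) : H) := by
      rw [map_sub, hLK]
      simp
    have hLnorm : ‖(Submodule.orthogonalProjectionOnto L z : H)‖ ≤ ‖z - Submodule.orthogonalProjectionOnto K z‖ := by
      rw [hLz]
      have hle := (Submodule.orthogonalProjectionOnto L).le_opNorm (z - Submodule.orthogonalProjectionOnto K z)
      have hn1 := Submodule.orthogonalProjectionOnto_norm_le L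
      calc ‖(Submodule.orthogonalProjectionOnto L (z - Submodule.orthogonalProjectionOnto K z) : H)‖
          = ‖Submodule.orthogonalProjectionOnto L (z - Submodule.orthogonalProjectionOnto K z)‖ := rfl
        _ ≤ ‖Submodule.orthogonalProjectionOnto L‖ * ‖z - (Submodule.orthogonalProjectionOnto K z : H)‖ := hle
        _ ≤ ‖z - (Submodule.orthogonalProjectionOnto K z : H)‖ := by
            nlinarith [norm_nonneg (z - (Submodule.orthogonalProjectionOnto K z : H))]
    rw [show ‖z‖ = Real.sqrt (‖z‖ ^ 2) from (Real.sqrt_sq (norm_nonneg z)).symm]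
    apply Real.sqrt_le_sqrt
    have := sq_le_sq' (by linarith [norm_nonneg ((Submodule.orthogonalProjectionOnto L z : H))]) hLnorm
    nlinarith [norm_nonneg ((Submodule.orthogonalProjectionOnto L z : H)),
      norm_nonneg (z - (Submodule.orthogonalProjectionOnto K z : H))]
  intro x hx y hy
  rw [hd3 x hx, hd3 y hy]
  set c := ‖x - y‖
  have hc0 : (0:ℝ) ≤ c := norm_nonneg _
  -- generic branch lemma
  have branch : ∀ (K L : Submodule ℝ H) (_ : CompleteSpace K) (_ : CompleteSpace L)
      (d : H → ℝ), L ≤ Kᗮ →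
      (∀ v ∈ K, d v ∈ Set.Icc (0:ℝ) 1) →
      (∀ u ∈ K, ∀ v ∈ K, d v ≤ d u + ‖u - v‖) →
      Real.sqrt (d ((Submodule.orthogonalProjectionOnto K y : H)) ^ 2 +
        ‖(Submodule.orthogonalProjectionOnto L y : H)‖ ^ 2) ≤
      Real.sqrt (d ((Submodule.orthogonalProjectionOnto K x : H)) ^ 2 +
        ‖(Submodule.orthogonalProjectionOnto L x : H)‖ ^ 2) + c := by
    intro K L _ _ d hKL hr hax
    have hKx : (Submodule.orthogonalProjectionOnto K x : H) ∈ K := SetLike.coe_mem _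
    have hKy : (Submodule.orthogonalProjectionOnto K y : H) ∈ K := SetLike.coe_mem _
    apply aux_sqrt_tri (u := ‖(Submodule.orthogonalProjectionOnto K x : H) - Submodule.orthogonalProjectionOnto K y‖)
      (w := ‖(Submodule.orthogonalProjectionOnto L x : H) - Submodule.orthogonalProjectionOnto L y‖)
    · exact (hr _ hKx).1
    · exact norm_nonneg _
    · exact norm_nonneg _
    · exact norm_nonneg _
    · exact (hr _ hKy).1
    · exact norm_nonneg _
    · exact hax _ hKx _ hKy
    · calc ‖(Submodule.orthogonalProjectionOnto L y : H)‖
          = ‖(Submodule.orthogonalProjectionOnto L x : H) -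
              ((Submodule.orthogonalProjectionOnto L x : H) - Submodule.orthogonalProjectionOnto L y)‖ := by
            congr 1; abel
        _ ≤ ‖(Submodule.orthogonalProjectionOnto L x : H)‖ +
              ‖(Submodule.orthogonalProjectionOnto L x : H) - Submodule.orthogonalProjectionOnto L y‖ :=
            norm_sub_le _ _
    · have e1 : (Submodule.orthogonalProjectionOnto K x : H) - Submodule.orthogonalProjectionOnto K y =
          (Submodule.orthogonalProjectionOnto K (x - y) : H) := by
        rw [map_sub]; simp
      have e2 : (Submodule.orthogonalProjectionOnto L x : H) - Submodule.orthogonalProjectionOnto L y =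
          (Submodule.orthogonalProjectionOnto L (x - y) : H) := by
        rw [map_sub]; simp
      rw [e1, e2]
      exact pyth K L ‹_› ‹_› hKL (x - y)
  have b1 := branch H1 (H2 ⊓ H0ᗮ) ‹_› ‹_› d1 hperp2 hr1 ax2_1
  have b2 := branch H2 (H1 ⊓ H0ᗮ) ‹_› ‹_› d2 hperp1 hr2 ax2_2
  rcases le_total
    (Real.sqrt (d1 ((Submodule.orthogonalProjectionOnto H1 x : H)) ^ 2 +
      ‖(Submodule.orthogonalProjectionOnto (H2 ⊓ H0ᗮ) x : H)‖ ^ 2))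
    (Real.sqrt (d2 ((Submodule.orthogonalProjectionOnto H2 x : H)) ^ 2 +
      ‖(Submodule.orthogonalProjectionOnto (H1 ⊓ H0ᗮ) x : H)‖ ^ 2)) with h | h
  · rw [min_eq_left h]
    exact (min_le_left _ _).trans b1
  · rw [min_eq_right h]
    exact (min_le_right _ _).trans b2
end
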